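/- Let f, g be nonconstant (ρ,σ)-homogeneous polynomials in K[X,Y] of integer degrees v > 0 and u > 0 respectively, with (ρ,σ) ∈ ℤ² \ {(0,0)}, satisfying f^u = λ g^v for some λ ∈ K^*. Let d = gcd(v,u), v₀ = v/d, u₀ = u/d. Then there exist h ∈ K[X,Y] and nonzero γ, β ∈ K such that f = γ h^{v₀} and g = β h^{u₀}. -/

import Mathlib

open MvPolynomial

/-- `f` is `(ρ,σ)`-homogeneous of (integer) degree `τ` for `(ρ,σ) ∈ ℤ²`: every monomial
`X^i Y^j` occurring in `f` satisfies `ρ i + σ j = τ`. -/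
def IsZHomogeneous {K : Type*} [CommRing K] (ρ σ : ℤ) (τ : ℤ)
    (f : MvPolynomial (Fin 2) K) : Prop :=
  ∀ m ∈ f.support, ρ * (m 0 : ℤ) + σ * (m 1 : ℤ) = τ

/-- Units of `K[X,Y]` are nonzero constants. -/
lemma aux_isUnit_eq_C {K : Type*} [Field K] {p : MvPolynomial (Fin 2) K} (hp : IsUnit p) :
    ∃ c : K, c ≠ 0 ∧ p = C c := by
  let e := MvPolynomial.finSuccEquiv K 1
  have h1 : IsUnit (e p) := hp.map e
  obtain ⟨r, hr, hrq⟩ := Polynomial.isUnit_iff.mp h1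
  let e2 := MvPolynomial.finSuccEquiv K 0
  have h2 : IsUnit (e2 r) := hr.map e2
  obtain ⟨s, hs, hsq⟩ := Polynomial.isUnit_iff.mp h2
  obtain ⟨c, rfl⟩ : ∃ c : K, s = C c := ⟨_, (MvPolynomial.eq_C_of_isEmpty s)⟩
  have hc : c ≠ 0 := by
    rintro rfl
    simp only [map_zero] at hs
    exact hs.ne_zero rfl
  refine ⟨c, hc, ?_⟩
  have hr' : r = C c := by
    have h3 := RingHom.congr_fun (MvPolynomial.finSuccEquiv_comp_C_eq_C (R := K) 0) c
    simp only [RingHom.comp_apply, RingHom.coe_coe] at h3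
    rw [← h3, hsq]
    exact (e2.symm_apply_apply r).symm
  have h4 := RingHom.congr_fun (MvPolynomial.finSuccEquiv_comp_C_eq_C (R := K) 1) c
  simp only [RingHom.comp_apply, RingHom.coe_coe] at h4
  rw [← h4, ← hr', hrq]
  exact (e.symm_apply_apply p).symm

/-- UFD power-relation lemma: if `f^u` is a unit times `g^v`, then `f` and `g` are
unit multiples of powers of a common element. -/
lemma aux_ufd {R : Type*} [CommRing R] [IsDomain R] [UniqueFactorizationMonoid R]
    {f g w : R} (hw : IsUnit w) (hfne : f ≠ 0) (hgne : g ≠ 0) {v u : ℕ}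
    (hv : 0 < v) (hu : 0 < u) (hpow : f ^ u = w * g ^ v) :
    ∃ (h w1 w2 : R), IsUnit w1 ∧ IsUnit w2 ∧
      f = w1 * h ^ (v / Nat.gcd v u) ∧ g = w2 * h ^ (u / Nat.gcd v u) := by
  classical
  letI : NormalizationMonoid R := UniqueFactorizationMonoid.normalizationMonoid.toNormalizationMonoid
  set d := Nat.gcd v u with hd
  have hdpos : 0 < d := Nat.gcd_pos_of_pos_left _ hv
  set v₀ := v / d with hv₀
  set u₀ := u / d with hu₀
  have hvd : v₀ * d = v := Nat.div_mul_cancel (Nat.gcd_dvd_left v u)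
  have hud : u₀ * d = u := Nat.div_mul_cancel (Nat.gcd_dvd_right v u)
  have hv₀pos : 0 < v₀ := Nat.div_pos (Nat.le_of_dvd hv (Nat.gcd_dvd_left v u)) hdpos
  have hu₀pos : 0 < u₀ := Nat.div_pos (Nat.le_of_dvd hu (Nat.gcd_dvd_right v u)) hdpos
  have hcop : Nat.Coprime v₀ u₀ := Nat.coprime_div_gcd_div_gcd hdpos
  set Mf := UniqueFactorizationMonoid.normalizedFactors f with hMf
  set Mg := UniqueFactorizationMonoid.normalizedFactors g with hMg
  have hassoc : Associated (g ^ v) (f ^ u) := by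
    refine ⟨hw.unit, ?_⟩
    rw [IsUnit.unit_spec, hpow, mul_comm]
  have hkey : u • Mf = v • Mg := by
    have h1 := hassoc.normalizedFactors_eq
    rwa [UniqueFactorizationMonoid.normalizedFactors_pow,
      UniqueFactorizationMonoid.normalizedFactors_pow, eq_comm] at h1
  have hcount : ∀ q : R, u₀ * Mf.count q = v₀ * Mg.count q := by
    intro q
    have := congrArg (Multiset.count q) hkey
    rw [Multiset.count_nsmul, Multiset.count_nsmul, ← hvd, ← hud] at this
    rw [mul_right_comm u₀ d, mul_right_comm v₀ d] at this
    exact Nat.eq_of_mul_eq_mul_right hdpos this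
  have hdvd : ∀ q : R, v₀ ∣ Mf.count q := by
    intro q
    exact hcop.dvd_of_dvd_mul_left ⟨Mg.count q, hcount q⟩
  set M : Multiset R := Mf.toFinset.sum (fun p => Multiset.replicate (Mf.count p / v₀) p)
    with hM
  have hcountM : ∀ q : R, M.count q = Mf.count q / v₀ := by
    intro q
    rw [hM, Multiset.count_sum']
    simp only [Multiset.count_replicate]
    rw [Finset.sum_ite_eq' Mf.toFinset q (fun p => Mf.count p / v₀)]
    split_ifs with hq
    · rfl
    · have hz : Mf.count q = 0 :=
        Multiset.count_eq_zero.mpr (fun hmem => hq (Multiset.mem_toFinset.mpr hmem))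
      rw [hz, Nat.zero_div]
  have hMfM : v₀ • M = Mf := by
    ext q
    rw [Multiset.count_nsmul, hcountM q, Nat.mul_div_cancel' (hdvd q)]
  have hMgM : u₀ • M = Mg := by
    ext q
    rw [Multiset.count_nsmul, hcountM q]
    obtain ⟨t, ht⟩ := hdvd q
    have hcq := hcount q
    rw [ht] at hcq ⊢
    rw [Nat.mul_div_cancel_left t hv₀pos]
    rw [mul_comm v₀ t, ← mul_assoc] at hcq
    have : Mg.count q = u₀ * t := by
      have := hcq.symm
      rw [mul_comm u₀ t] at this ⊢
      rw [mul_comm v₀ (Mg.count q)] at this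
      exact Nat.eq_of_mul_eq_mul_right hv₀pos (by linarith)
    omega
  refine ⟨M.prod, ?_⟩
  have hfassoc : Associated (M.prod ^ v₀) f := by
    rw [← Multiset.prod_nsmul, hMfM]
    exact UniqueFactorizationMonoid.prod_normalizedFactors hfne
  have hgassoc : Associated (M.prod ^ u₀) g := by
    rw [← Multiset.prod_nsmul, hMgM]
    exact UniqueFactorizationMonoid.prod_normalizedFactors hgne
  obtain ⟨t1, ht1⟩ := hfassoc
  obtain ⟨t2, ht2⟩ := hgassoc
  exact ⟨t1, t2, t1.isUnit, t2.isUnit, by rw [← ht1, mul_comm], by rw [← ht2, mul_comm]⟩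

/-- Let `f, g` be nonconstant `(ρ,σ)`-homogeneous polynomials of positive integer degrees
`v` and `u`, with `f^u = λ g^v` for some `λ ∈ K^*`. With `d = gcd(v,u)`, `v₀ = v/d`,
`u₀ = u/d`, there are `h ∈ K[X,Y]` and nonzero `γ, β ∈ K` with `f = γ h^{v₀}`, `g = β h^{u₀}`. -/
theorem power_relation_common_root {K : Type*} [Field K] [CharZero K]
    (ρ σ : ℤ) (hρσ : (ρ, σ) ≠ (0, 0)) (v u : ℕ) (hv : 0 < v) (hu : 0 < u)
    (f g : MvPolynomial (Fin 2) K)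
    (hfc : ∀ c : K, f ≠ C c) (hgc : ∀ c : K, g ≠ C c)
    (hf : IsZHomogeneous ρ σ (v : ℤ) f) (hg : IsZHomogeneous ρ σ (u : ℤ) g)
    (lam : K) (hlam : lam ≠ 0) (hpow : f ^ u = C lam * g ^ v) :
    ∃ (h : MvPolynomial (Fin 2) K) (γ β : K), γ ≠ 0 ∧ β ≠ 0 ∧
      f = C γ * h ^ (v / Nat.gcd v u) ∧ g = C β * h ^ (u / Nat.gcd v u) := by
  have hfne : f ≠ 0 := by simpa using hfc 0
  have hgne : g ≠ 0 := by simpa using hgc 0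
  have hwunit : IsUnit (C lam : MvPolynomial (Fin 2) K) :=
    IsUnit.of_mul_eq_one (C lam⁻¹) (by rw [← map_mul, mul_inv_cancel₀ hlam, map_one])
  obtain ⟨h, w1, w2, hw1, hw2, hf1, hg1⟩ := aux_ufd hwunit hfne hgne hv hu hpow
  obtain ⟨γ, hγ, rfl⟩ := aux_isUnit_eq_C hw1
  obtain ⟨β, hβ, rfl⟩ := aux_isUnit_eq_C hw2
  exact ⟨h, γ, β, hγ, hβ, hf1, hg1⟩
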